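/- Let B : T → ⋀^p T* be a linear map. The subspace L := {(X, B X) : X ∈ T} of E^p is isotropic if and only if there exists an alternating (p+1)-form ω ∈ ⋀^{p+1} T* such that B X = −ι_X ω for all X ∈ T. -/

import Mathlib

open Module

/-- `E^p` for `p = q+1`: the vector space `T ⊕ ⋀^{q+1} T*`. -/
abbrev EP (T : Type) [AddCommGroup T] [Module ℝ T] (q : ℕ) :=
  T × (T [⋀^Fin (q+1)]→ₗ[ℝ] ℝ)

variable {T : Type} [AddCommGroup T] [Module ℝ T]

/-- The `⋀^q T*`-valued pairing on `E^{q+1}`: `⟨(X,α),(Y,β)⟩ = ι_X β + ι_Y α`. -/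
noncomputable def pairing {q : ℕ} (e₁ e₂ : EP T q) : T [⋀^Fin q]→ₗ[ℝ] ℝ :=
  e₂.2.curryLeft e₁.1 + e₁.2.curryLeft e₂.1

def orthSet {q : ℕ} (L : Set (EP T q)) : Set (EP T q) :=
  {e | ∀ l ∈ L, pairing e l = 0}

def IsIsotropic {q : ℕ} (L : Set (EP T q)) : Prop :=
  ∀ e₁ ∈ L, ∀ e₂ ∈ L, pairing e₁ e₂ = 0

/-- `toMultilinearMap` as a linear map. -/
def toML (q : ℕ) : (T [⋀^Fin (q+1)]→ₗ[ℝ] ℝ) →ₗ[ℝ]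
    MultilinearMap ℝ (fun _ : Fin (q+1) => T) ℝ where
  toFun f := f.toMultilinearMap
  map_add' _ _ := rfl
  map_smul' _ _ := rfl

lemma swap_cons_cons {n : ℕ} (X Y : T) (v : Fin n → T) :
    (Fin.cons X (Fin.cons Y v) : Fin (n+2) → T) ∘ Equiv.swap 0 1 =
      Fin.cons Y (Fin.cons X v) := by
  funext k
  refine Fin.cases ?_ (fun k => Fin.cases ?_ (fun k => ?_) k) k
  · simp [Equiv.swap_apply_left]
  · simp [Equiv.swap_apply_right]
  · have h0 : k.succ.succ ≠ (0 : Fin (n+2)) := by simp [Fin.ext_iff]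
    have h1 : k.succ.succ ≠ (1 : Fin (n+2)) := by
      simp [Fin.ext_iff]
    simp [Function.comp, Equiv.swap_apply_of_ne_of_ne h0 h1]

theorem stmt8 [FiniteDimensional ℝ T] (q : ℕ) (hq : q + 1 ≤ finrank ℝ T)
    (B : T →ₗ[ℝ] (T [⋀^Fin (q+1)]→ₗ[ℝ] ℝ)) :
    IsIsotropic {e : EP T q | ∃ X : T, e = (X, B X)} ↔
      ∃ ω : T [⋀^Fin (q+2)]→ₗ[ℝ] ℝ, ∀ X : T, B X = -(ω.curryLeft X) := by
  constructor
  · intro h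
    have hA : ∀ X Y : T, (B Y).curryLeft X + (B X).curryLeft Y = 0 := by
      intro X Y
      exact h (X, B X) ⟨X, rfl⟩ (Y, B Y) ⟨Y, rfl⟩
    have hself : ∀ X : T, (B X).curryLeft X = 0 := by
      intro X
      have := hA X X
      have h2 : (2 : ℝ) • (B X).curryLeft X = 0 := by
        rw [two_smul]; exact this
      simpa using smul_eq_zero.mp h2
    have hzero : ∀ (X : T) (u : Fin (q+1) → T), u 0 = X → (B X) u = 0 := by
      intro X u hu
      have : u = Fin.cons X (Fin.tail u) := by
        rw [← hu]; exact (Fin.cons_self_tail u).symm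
      rw [this]
      have := congrArg (fun f => f (Fin.tail u)) (hself X)
      simp at this; exact this
    -- the multilinear map F v = B (v 0) (tail v)
    set F : MultilinearMap ℝ (fun _ : Fin (q+2) => T) ℝ :=
      ((toML q).comp B).uncurryLeft with hF
    have hFapp : ∀ v : Fin (q+2) → T, F v = B (v 0) (Fin.tail v) := fun v => rfl
    refine ⟨{ toMultilinearMap := -F, map_eq_zero_of_eq' := ?_ }, ?_⟩
    · intro v i j hv hij
      have key : F v = 0 := by
        rw [hFapp]
        have hzero' : ∀ (X : T) (u : Fin (q+1) → T) (k : Fin (q+1)),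
            u k = X → (B X) u = 0 := by
          intro X u k hk
          rcases eq_or_ne k 0 with rfl | hk0
          · exact hzero X u hk
          · have hs := (B X).map_swap u hk0.symm
            have h0 : (u ∘ Equiv.swap 0 k) 0 = X := by
              simp [Equiv.swap_apply_left, hk]
            have := hzero X (u ∘ Equiv.swap 0 k) h0
            rw [hs] at this
            linarith [this]
        rcases eq_or_ne i 0 with hi | hi
        · -- i = 0, j ≠ 0
          subst hi
          have hj : j ≠ 0 := fun h => hij h.symm
          refine hzero' (v 0) (Fin.tail v) (j.pred hj) ?_
          simp [Fin.tail, Fin.succ_pred, hv]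
        · rcases eq_or_ne j 0 with rfl | hj
          · refine hzero' (v 0) (Fin.tail v) (i.pred hi) ?_
            simp [Fin.tail, Fin.succ_pred, ← hv]
          · -- both nonzero: use alternating of B (v 0)
            have : Fin.tail v (i.pred hi) = Fin.tail v (j.pred hj) := by
              simp [Fin.tail, Fin.succ_pred, hv]
            exact (B (v 0)).map_eq_zero_of_eq _ this
              (fun hc => hij (by
                have := congrArg Fin.succ hc
                simpa [Fin.succ_pred] using this))
      show -F v = 0
      rw [key, neg_zero]
    · intro X
      ext v
      simp only [AlternatingMap.neg_apply, AlternatingMap.curryLeft_apply_apply]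
      show (B X) v = -(-F (Matrix.vecCons X v))
      rw [neg_neg, hFapp]
      simp [Matrix.vecCons]
  · rintro ⟨ω, hω⟩ e₁ ⟨X, rfl⟩ e₂ ⟨Y, rfl⟩
    ext v
    simp only [pairing, AlternatingMap.add_apply, hω, AlternatingMap.neg_apply,
      AlternatingMap.curryLeft_apply_apply]
    have hs := ω.map_swap (Fin.cons X (Fin.cons Y v))
      (show (0 : Fin (q+2)) ≠ 1 from Fin.zero_ne_one)
    rw [swap_cons_cons] at hs
    show -ω (Matrix.vecCons Y (Matrix.vecCons X v)) +
      -ω (Matrix.vecCons X (Matrix.vecCons Y v)) = (0 : T [⋀^Fin q]→ₗ[ℝ] ℝ) v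
    simp only [Matrix.vecCons, AlternatingMap.zero_apply] at *
    rw [hs]
    ring
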